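/- In ℝ², let ξ₁ = (1,2), ξ₂ = (3,4), η₁ = (1,1), η₂ = (1,-1). The operator S(x) = ⟨x, ξ₁⟩η₁ + ⟨x, ξ₂⟩η₂ is invertible, but there is a nonzero vector v ∈ ℝ² with ⟨v, ξ₁⟩⟨η₁, v⟩ + ⟨v, ξ₂⟩⟨η₂, v⟩ = 0; hence ({ξ₁, ξ₂}, {η₁, η₂}) is a pair frame but not a biframe. -/

import Mathlib

open scoped InnerProductSpace

/-- In `ℝ²`, with `ξ₁ = (1,2)`, `ξ₂ = (3,4)`, `η₁ = (1,1)`, `η₂ = (1,-1)`: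
the operator `S x = ⟨x, ξ₁⟩η₁ + ⟨x, ξ₂⟩η₂` is invertible (bijective), but there is a
nonzero `v` with `⟨v, ξ₁⟩⟨η₁, v⟩ + ⟨v, ξ₂⟩⟨η₂, v⟩ = 0`; so the pair is a pair frame
but not a biframe. -/
theorem pair_frame_not_biframe :
    let E := EuclideanSpace ℝ (Fin 2)
    let ξ₁ : E := (WithLp.equiv 2 (Fin 2 → ℝ)).symm ![1, 2]
    let ξ₂ : E := (WithLp.equiv 2 (Fin 2 → ℝ)).symm ![3, 4]
    let η₁ : E := (WithLp.equiv 2 (Fin 2 → ℝ)).symm ![1, 1]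
    let η₂ : E := (WithLp.equiv 2 (Fin 2 → ℝ)).symm ![1, -1]
    Function.Bijective (fun x : E => ⟪ξ₁, x⟫_ℝ • η₁ + ⟪ξ₂, x⟫_ℝ • η₂) ∧
      ∃ v : E, v ≠ 0 ∧ ⟪ξ₁, v⟫_ℝ * ⟪v, η₁⟫_ℝ + ⟪ξ₂, v⟫_ℝ * ⟪v, η₂⟫_ℝ = 0 := by
  intro E ξ₁ ξ₂ η₁ η₂
  constructor
  · rw [Function.bijective_iff_has_inverse]
    refine ⟨fun y => (WithLp.equiv 2 (Fin 2 → ℝ)).symm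
      ![(-2 * y 0 - 6 * y 1) / 4, (2 * y 0 + 4 * y 1) / 4], ?_, ?_⟩
    · intro x
      ext i
      fin_cases i <;>
        · simp [E, ξ₁, ξ₂, η₁, η₂, PiLp.inner_apply, RCLike.inner_apply, map_ofNat, conj_trivial, WithLp.equiv_symm_apply, PiLp.toLp_apply, Fin.sum_univ_two, Matrix.cons_val_zero, Matrix.cons_val_one, Matrix.head_cons]
          ring
    · intro y
      ext i
      fin_cases i <;>
        · simp [E, ξ₁, ξ₂, η₁, η₂, PiLp.inner_apply, RCLike.inner_apply, map_ofNat, conj_trivial, WithLp.equiv_symm_apply, PiLp.toLp_apply, Fin.sum_univ_two, Matrix.cons_val_zero, Matrix.cons_val_one, Matrix.head_cons]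
          ring
  · refine ⟨(WithLp.equiv 2 (Fin 2 → ℝ)).symm ![Real.sqrt 3 - 1, 2], ?_, ?_⟩
    · intro h
      have h1 : ((WithLp.equiv 2 (Fin 2 → ℝ)).symm ![Real.sqrt 3 - 1, 2] : E) 1 = 0 := by
        rw [h]; rfl
      simp at h1
    · have hs : Real.sqrt 3 ^ 2 = 3 := Real.sq_sqrt (by norm_num)
      simp [E, ξ₁, ξ₂, η₁, η₂, PiLp.inner_apply, RCLike.inner_apply, map_ofNat, conj_trivial, WithLp.equiv_symm_apply, PiLp.toLp_apply, Fin.sum_univ_two, Matrix.cons_val_zero, Matrix.cons_val_one, Matrix.head_cons]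
      nlinarith [hs]
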